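/- Let d be a positive squarefree integer with d ≡ 3 (mod 4), let a be a positive integer, and let ψ be a Dirichlet character modulo a. Then for every complex s with Re(s) > 1, ∑_{n=1}^{∞} ψ(n)·F(n)^{−s} = (∑_{n=1}^{∞} ψ(n)·n^{−s}) · ∏_{p prime} (1 − ψ(p)·p^{−s} + (1 + χ(p)/p)^{−s}·ψ(p)·p^{−s}), where both series converge absolutely and the product over primes converges. -/

import Mathlib

/-- The quadratic character attached to `ℚ(√-d)`, defined on primes:
`χ(2) = (-1)^((d²-1)/8)` and `χ(p) = (-d/p)` (Legendre symbol) for odd primes `p`;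
`0` off the primes. -/
noncomputable def chi (d : ℕ) (p : ℕ) : ℤ :=
  if hp : p.Prime then
    if p = 2 then (-1) ^ ((d ^ 2 - 1) / 8)
    else @legendreSym p ⟨hp⟩ (-(d : ℤ))
  else 0

/-- `F(n) = n · ∏_{p ∣ n} (1 + χ(p)/p)`. -/
noncomputable def F (d : ℕ) (n : ℕ) : ℚ :=
  n * ∏ p ∈ n.primeFactors, (1 + (chi d p : ℚ) / (p : ℚ))


open Complex


lemma chi_cases (d p : ℕ) : chi d p = 0 ∨ chi d p = 1 ∨ chi d p = -1 := by
  unfold chi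
  split_ifs with hp h2
  · rcases Nat.even_or_odd ((d ^ 2 - 1) / 8) with h | h
    · exact Or.inr (Or.inl h.neg_one_pow)
    · exact Or.inr (Or.inr h.neg_one_pow)
  · have : Fact p.Prime := ⟨hp⟩
    by_cases h0 : ((-(d:ℤ) : ℤ) : ZMod p) = 0
    · exact Or.inl ((legendreSym.eq_zero_iff p _).mpr h0)
    · rcases legendreSym.eq_one_or_neg_one p h0 with h | h
      · exact Or.inr (Or.inl h)
      · exact Or.inr (Or.inr h)
  · exact Or.inl rfl

lemma c_bounds {d p : ℕ} (hp : p.Prime) :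
    (1/2 : ℚ) ≤ 1 + (chi d p : ℚ) / p ∧ 1 + (chi d p : ℚ) / p ≤ 2 := by
  have hp2 : (2:ℚ) ≤ (p:ℚ) := by exact_mod_cast hp.two_le
  have hppos : (0:ℚ) < p := by linarith
  have h1p : 1/(p:ℚ) ≤ 1/2 := by
    rw [div_le_div_iff₀ hppos (by norm_num)]; linarith
  have h1pos : (0:ℚ) < 1/p := by positivity
  rcases chi_cases d p with h | h | h <;> rw [h] <;> push_cast <;> constructor <;>
    simp only [zero_div, neg_div, one_div] at * <;> linarith

lemma c_pos {d p : ℕ} (hp : p.Prime) : (0:ℚ) < 1 + (chi d p : ℚ) / p :=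
  lt_of_lt_of_le (by norm_num) (c_bounds hp).1

lemma F_pos (d : ℕ) {n : ℕ} (hn : n ≠ 0) : 0 < F d n := by
  unfold F
  apply mul_pos (by exact_mod_cast Nat.pos_of_ne_zero hn)
  exact Finset.prod_pos fun p hp => c_pos (Nat.prime_of_mem_primeFactors hp)

lemma F_nonneg (d : ℕ) (n : ℕ) : 0 ≤ F d n := by
  rcases eq_or_ne n 0 with rfl | hn
  · simp [F]
  · exact (F_pos d hn).le

lemma F_mul (d : ℕ) {m n : ℕ} (h : Nat.Coprime m n) : F d (m * n) = F d m * F d n := by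
  rcases eq_or_ne m 0 with rfl | hm
  · have : n = 1 := by simpa using h
    subst this; simp [F]
  rcases eq_or_ne n 0 with rfl | hn
  · have : m = 1 := by simpa using h
    subst this; simp [F]
  unfold F
  rw [Nat.primeFactors_mul hm hn, Finset.prod_union h.disjoint_primeFactors, Nat.cast_mul]
  ring

lemma F_prime_pow (d : ℕ) {p : ℕ} (hp : p.Prime) (e : ℕ) :
    F d (p ^ (e + 1)) = (p:ℚ) ^ (e + 1) * (1 + (chi d p : ℚ) / p) := by
  unfold F
  rw [Nat.primeFactors_prime_pow (Nat.succ_ne_zero e) hp, Finset.prod_singleton, Nat.cast_pow]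

lemma lemmaA {σ : ℝ} (hσ : 1 < σ) {u : ℕ → ℝ} (h0 : u 0 = 0) (h1 : u 1 = 1)
    (hnn : ∀ n, 0 ≤ u n) (hmul : ∀ {m n : ℕ}, Nat.Coprime m n → u (m * n) = u m * u n)
    {C : ℝ} (hC : 0 ≤ C)
    (hb : ∀ p : ℕ, p.Prime → ∀ e : ℕ, u (p ^ (e + 1)) ≤ C * ((p:ℝ) ^ (-σ)) ^ (e + 1)) :
    Summable u := by
  classical
  have hσ0 : (0:ℝ) ≤ σ := by linarith
  have hr0 : ∀ p : ℕ, p.Prime → 0 ≤ (p:ℝ) ^ (-σ) := fun p hp => Real.rpow_nonneg (by positivity) _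
  have hrle : ∀ p : ℕ, p.Prime → (p:ℝ) ^ (-σ) ≤ 1/2 := by
    intro p hp
    have h2p : (2:ℝ) ≤ (p:ℝ) := by exact_mod_cast hp.two_le
    have hA : (2:ℝ) ≤ (p:ℝ) ^ σ :=
      calc (2:ℝ) = (2:ℝ) ^ (1:ℝ) := (Real.rpow_one 2).symm
        _ ≤ (2:ℝ) ^ σ := Real.rpow_le_rpow_of_exponent_le (by norm_num) hσ.le
        _ ≤ (p:ℝ) ^ σ := Real.rpow_le_rpow (by norm_num) h2p hσ0
    rw [Real.rpow_neg (by positivity)]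
    rw [show (1:ℝ)/2 = (2:ℝ)⁻¹ by norm_num]
    exact inv_anti₀ (by norm_num) hA
  have hlocal : ∀ p : ℕ, p.Prime → Summable (fun e : ℕ => u (p ^ e)) ∧
      (∑' e : ℕ, u (p ^ e)) ≤ 1 + 2 * C * ((p:ℝ) ^ (-σ)) := by
    intro p hp
    set r := (p:ℝ) ^ (-σ) with hrdef
    have h0r := hr0 p hp
    have hhalf := hrle p hp
    have hgeo : Summable (fun e : ℕ => r ^ e) := summable_geometric_of_lt_one h0r (by linarith)
    have hgeo' : Summable (fun e : ℕ => C * r ^ (e + 1)) :=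
      ((summable_nat_add_iff 1).mpr hgeo).mul_left C
    have hshift : Summable (fun e : ℕ => u (p ^ (e + 1))) :=
      hgeo'.of_nonneg_of_le (fun e => hnn _) (fun e => hb p hp e)
    have hsum0 : Summable (fun e : ℕ => u (p ^ e)) := (summable_nat_add_iff 1).mp hshift
    refine ⟨hsum0, ?_⟩
    rw [Summable.tsum_eq_zero_add hsum0, pow_zero, h1]
    have hle1 : (∑' e : ℕ, u (p ^ (e + 1))) ≤ ∑' e : ℕ, C * r ^ (e + 1) :=
      Summable.tsum_le_tsum (fun e => hb p hp e) hshift hgeo'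
    have heq : (∑' e : ℕ, C * r ^ (e + 1)) = (C * r) * (1 - r)⁻¹ := by
      have h' : ∀ e : ℕ, C * r ^ (e + 1) = (C * r) * r ^ e := fun e => by ring
      simp_rw [h']
      rw [tsum_mul_left, tsum_geometric_of_lt_one h0r (by linarith)]
    have hinv : (1 - r)⁻¹ ≤ 2 := by
      rw [show (2:ℝ) = ((1:ℝ)/2)⁻¹ by norm_num]
      exact inv_anti₀ (by norm_num) (by linarith)
    have hfin : (C * r) * (1 - r)⁻¹ ≤ (C * r) * 2 :=
      mul_le_mul_of_nonneg_left hinv (by positivity)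
    have := hle1.trans_eq heq
    nlinarith
  set Z := ∑' n : ℕ, ((n:ℝ) ^ σ)⁻¹ with hZ
  have hZsum : Summable (fun n : ℕ => ((n:ℝ) ^ σ)⁻¹) := Real.summable_nat_rpow_inv.mpr hσ
  apply summable_of_sum_le (c := Real.exp (2 * C * Z)) hnn
  intro t
  set N := t.sup id + 1 with hN
  have key := (EulerProduct.summable_and_hasSum_smoothNumbers_prod_primesBelow_tsum
    (f := u) h1 hmul (fun {p} hp => ((hlocal p hp).1.congr
      (fun e => (Real.norm_of_nonneg (hnn _)).symm))) N).2
  have hsub : ∑ m ∈ t, u m ≤ ∏ p ∈ N.primesBelow, ∑' e : ℕ, u (p ^ e) := by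
    have h1' : ∑ m ∈ t.filter (· ∈ N.smoothNumbers), u m = ∑ m ∈ t, u m := by
      apply Finset.sum_filter_of_ne
      intro m hm hum
      have hm0 : m ≠ 0 := by rintro rfl; exact hum h0
      refine Nat.mem_smoothNumbers'.mpr fun q hq hqd => ?_
      have hq1 : q ≤ m := Nat.le_of_dvd (Nat.pos_of_ne_zero hm0) hqd
      have hq2 : m ≤ t.sup id := Finset.le_sup (f := id) hm
      omega
    rw [← h1', ← Finset.sum_subtype_eq_sum_filter]
    exact sum_le_hasSum _ (fun m _ => hnn m) key
  refine hsub.trans ?_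
  calc ∏ p ∈ N.primesBelow, ∑' e : ℕ, u (p ^ e)
      ≤ ∏ p ∈ N.primesBelow, Real.exp (2 * C * ((p:ℝ) ^ σ)⁻¹) := by
        apply Finset.prod_le_prod
        · exact fun p _ => tsum_nonneg fun e => hnn _
        · intro p hp
          have hpp := Nat.prime_of_mem_primesBelow hp
          refine ((hlocal p hpp).2).trans ?_
          have hexp := Real.add_one_le_exp (2 * C * ((p:ℝ) ^ σ)⁻¹)
          rw [Real.rpow_neg (by positivity)]
          linarith
    _ = Real.exp (∑ p ∈ N.primesBelow, 2 * C * ((p:ℝ) ^ σ)⁻¹) := (Real.exp_sum _ _).symm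
    _ ≤ Real.exp (2 * C * Z) := by
        apply Real.exp_le_exp.mpr
        rw [← Finset.mul_sum]
        refine mul_le_mul_of_nonneg_left ?_ (by positivity)
        exact Summable.sum_le_tsum _ (fun n _ => by positivity) hZsum

lemma ratCast_mul_cpow {q r : ℚ} (hq : 0 ≤ q) (hr : 0 ≤ r) (z : ℂ) :
    ((q * r : ℚ) : ℂ) ^ z = (q : ℂ) ^ z * (r : ℂ) ^ z := by
  have h := mul_cpow_ofReal_nonneg (a := (q:ℝ)) (b := (r:ℝ))
    (by exact_mod_cast hq) (by exact_mod_cast hr) z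
  rw [Rat.cast_mul]
  exact h

lemma norm_ratCast_cpow_of_pos {q : ℚ} (hq : 0 < q) (z : ℂ) :
    ‖((q : ℚ) : ℂ) ^ z‖ = (q : ℝ) ^ z.re := by
  rw [show ((q : ℚ) : ℂ) = ((q : ℝ) : ℂ) by push_cast; rfl, 
    Complex.norm_cpow_eq_rpow_re_of_pos (by exact_mod_cast hq)]

lemma pow_rpow_comm {x : ℝ} (hx : 0 ≤ x) (n : ℕ) (y : ℝ) : (x ^ n) ^ y = (x ^ y) ^ n := by
  rw [← Real.rpow_natCast x n, ← Real.rpow_mul hx, mul_comm, Real.rpow_mul hx, Real.rpow_natCast]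

lemma c_rpow_le {c : ℝ} (hc : 1/2 ≤ c) {σ : ℝ} (hσ : 0 ≤ σ) : c ^ (-σ) ≤ 2 ^ σ := by
  have hc0 : (0:ℝ) < c := by linarith
  have h1 : ((1:ℝ)/2) ^ σ ≤ c ^ σ := Real.rpow_le_rpow (by norm_num) hc hσ
  have h2 : ((1:ℝ)/2) ^ σ = ((2:ℝ) ^ σ)⁻¹ := by
    rw [show (1:ℝ)/2 = (2:ℝ)⁻¹ by norm_num, Real.inv_rpow (by norm_num)]
  have h3 : (0:ℝ) < ((1:ℝ)/2) ^ σ := Real.rpow_pos_of_pos (by norm_num) σ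
  rw [Real.rpow_neg hc0.le]
  calc (c ^ σ)⁻¹ ≤ (((1:ℝ)/2) ^ σ)⁻¹ := inv_anti₀ h3 h1
    _ = 2 ^ σ := by rw [h2, inv_inv]

section funs

variable {d a : ℕ} (ψ : DirichletCharacter ℂ a) (s : ℂ)

noncomputable def hfun (d : ℕ) (a : ℕ) (ψ : DirichletCharacter ℂ a) (s : ℂ) (n : ℕ) : ℂ :=
  ψ (n : ZMod a) * ((F d n : ℚ) : ℂ) ^ (-s)

noncomputable def wfun (d : ℕ) (a : ℕ) (ψ : DirichletCharacter ℂ a) (s : ℂ) (n : ℕ) : ℂ :=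
  if Squarefree n then ψ (n : ZMod a) * ((n : ℕ) : ℂ) ^ (-s) *
    ∏ p ∈ n.primeFactors, (((1 + (chi d p : ℚ) / (p : ℚ) : ℚ) : ℂ) ^ (-s) - 1)
  else 0

variable {ψ s}

lemma hfun_zero (hs0 : s ≠ 0) : hfun d a ψ s 0 = 0 := by
  simp [hfun, F, Complex.zero_cpow (neg_ne_zero.mpr hs0)]

lemma hfun_one : hfun d a ψ s 1 = 1 := by
  simp [hfun, F]

lemma hfun_mul {m n : ℕ} (h : Nat.Coprime m n) :
    hfun d a ψ s (m * n) = hfun d a ψ s m * hfun d a ψ s n := by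
  unfold hfun
  rw [F_mul d h, ratCast_mul_cpow (F_nonneg d m) (F_nonneg d n), Nat.cast_mul, map_mul]
  ring

lemma hfun_prime_pow (hs0 : s ≠ 0) {p : ℕ} (hp : p.Prime) (e : ℕ) :
    hfun d a ψ s (p ^ (e + 1)) =
      ((1 + (chi d p : ℚ) / (p : ℚ) : ℚ) : ℂ) ^ (-s) *
        (ψ ((p : ℕ) : ZMod a) * (p : ℂ) ^ (-s)) ^ (e + 1) := by
  unfold hfun
  rw [F_prime_pow d hp e, ratCast_mul_cpow (by positivity) (c_pos hp).le]
  have h1 : (((p:ℚ) ^ (e + 1) : ℚ) : ℂ) = (((p ^ (e + 1) : ℕ)) : ℂ) := by push_cast; ring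
  have h2 : (((p ^ (e + 1) : ℕ)) : ℂ) ^ (-s) = ((p : ℂ) ^ (-s)) ^ (e + 1) := by
    have h := map_pow (riemannZetaSummandHom hs0) p (e + 1)
    simpa [riemannZetaSummandHom] using h
  have h3 : ψ ((p ^ (e + 1) : ℕ) : ZMod a) = ψ ((p : ℕ) : ZMod a) ^ (e + 1) := by
    rw [Nat.cast_pow, map_pow]
  rw [h1, h2, h3, mul_pow]
  ring

lemma wfun_zero : wfun d a ψ s 0 = 0 := by
  simp [wfun, not_squarefree_zero]

lemma wfun_one : wfun d a ψ s 1 = 1 := by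
  simp [wfun, squarefree_one]

lemma wfun_mul {m n : ℕ} (h : Nat.Coprime m n) :
    wfun d a ψ s (m * n) = wfun d a ψ s m * wfun d a ψ s n := by
  unfold wfun
  by_cases hm : Squarefree m
  · by_cases hn : Squarefree n
    · rw [if_pos ((Nat.squarefree_mul h).mpr ⟨hm, hn⟩), if_pos hm, if_pos hn,
        Nat.primeFactors_mul hm.ne_zero hn.ne_zero,
        Finset.prod_union h.disjoint_primeFactors, Nat.cast_mul, map_mul, Nat.cast_mul]
      rw [natCast_mul_natCast_cpow]
      ring
    · rw [if_neg fun hsq => hn ((Nat.squarefree_mul h).mp hsq).2, if_neg hn, mul_zero]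
  · rw [if_neg fun hsq => hm ((Nat.squarefree_mul h).mp hsq).1, if_neg hm, zero_mul]

lemma wfun_prime {p : ℕ} (hp : p.Prime) :
    wfun d a ψ s p = ψ ((p : ℕ) : ZMod a) * (p : ℂ) ^ (-s) *
      (((1 + (chi d p : ℚ) / (p : ℚ) : ℚ) : ℂ) ^ (-s) - 1) := by
  rw [wfun, if_pos hp.squarefree, hp.primeFactors, Finset.prod_singleton]

lemma wfun_prime_pow_of_ge_two {p : ℕ} (hp : p.Prime) (e : ℕ) :
    wfun d a ψ s (p ^ (e + 2)) = 0 := by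
  rw [wfun, if_neg]
  intro hsq
  have := ((Nat.squarefree_pow_iff hp.ne_one (by omega)).mp hsq).2
  omega

end funs

section main

variable {d a : ℕ} {ψ : DirichletCharacter ℂ a} {s : ℂ}

lemma norm_hfun_prime_pow_le (hs : 1 < s.re) {p : ℕ} (hp : p.Prime) (e : ℕ) :
    ‖hfun d a ψ s (p ^ (e + 1))‖ ≤ (2:ℝ) ^ s.re * ((p:ℝ) ^ (-s.re)) ^ (e + 1) := by
  have hσ0 : (0:ℝ) ≤ s.re := by linarith
  have hppow : (p:ℕ) ^ (e + 1) ≠ 0 := pow_ne_zero _ hp.pos.ne'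
  have hcq : (1/2 : ℚ) ≤ 1 + (chi d p : ℚ) / p := (c_bounds hp).1
  have hcR : (1/2 : ℝ) ≤ ((1 + (chi d p : ℚ) / p : ℚ) : ℝ) := by
    have h' := (Rat.cast_le (K := ℝ)).mpr hcq
    rwa [show ((1/2 : ℚ) : ℝ) = (1/2 : ℝ) by norm_num] at h' 
  have hcR0 : (0:ℝ) < ((1 + (chi d p : ℚ) / p : ℚ) : ℝ) := by linarith
  unfold hfun
  rw [norm_mul, norm_ratCast_cpow_of_pos (F_pos d hppow), neg_re]
  have hFcast : ((F d (p ^ (e + 1)) : ℚ) : ℝ) =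
      ((p:ℝ) ^ (e + 1)) * ((1 + (chi d p : ℚ) / p : ℚ) : ℝ) := by
    rw [F_prime_pow d hp e]; push_cast; ring
  rw [hFcast, Real.mul_rpow (by positivity) hcR0.le, pow_rpow_comm (by positivity)]
  calc ‖ψ ((p ^ (e+1) : ℕ) : ZMod a)‖ * (((p:ℝ) ^ (-s.re)) ^ (e + 1) *
        ((1 + (chi d p : ℚ) / p : ℚ) : ℝ) ^ (-s.re))
      ≤ 1 * (((p:ℝ) ^ (-s.re)) ^ (e + 1) * (2:ℝ) ^ s.re) := by
        apply mul_le_mul (DirichletCharacter.norm_le_one ψ _) ?_ (by positivity) (by norm_num)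
        exact mul_le_mul_of_nonneg_left (c_rpow_le hcR hσ0) (by positivity)
    _ = (2:ℝ) ^ s.re * ((p:ℝ) ^ (-s.re)) ^ (e + 1) := by ring

lemma summable_norm_hfun (hs : 1 < s.re) :
    Summable (fun n : ℕ => ‖hfun d a ψ s n‖) := by
  have hs0 : s ≠ 0 := Complex.ne_zero_of_one_lt_re hs
  refine lemmaA hs ?_ ?_ (fun n => norm_nonneg _) (fun {m n} h => ?_)
    (C := (2:ℝ) ^ s.re) (by positivity) ?_
  · rw [hfun_zero hs0, norm_zero]
  · rw [hfun_one, norm_one]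
  · rw [hfun_mul h, norm_mul]
  · exact fun p hp e => norm_hfun_prime_pow_le hs hp e

lemma summable_norm_wfun (hs : 1 < s.re) :
    Summable (fun n : ℕ => ‖wfun d a ψ s n‖) := by
  have hσ0 : (0:ℝ) ≤ s.re := by linarith
  refine lemmaA hs ?_ ?_ (fun n => norm_nonneg _) (fun {m n} h => ?_)
    (C := (2:ℝ) ^ s.re + 1) (by positivity) ?_
  · rw [wfun_zero, norm_zero]
  · rw [wfun_one, norm_one]
  · rw [wfun_mul h, norm_mul]
  · intro p hp e
    match e with
    | Nat.succ k =>
      rw [show k + 1 + 1 = k + 2 from rfl, wfun_prime_pow_of_ge_two hp k, norm_zero]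
      positivity
    | 0 =>
      simp only [zero_add, pow_one]
      rw [wfun_prime hp]
      have hcq : (1/2 : ℚ) ≤ 1 + (chi d p : ℚ) / p := (c_bounds hp).1
      have hcR : (1/2 : ℝ) ≤ ((1 + (chi d p : ℚ) / p : ℚ) : ℝ) := by
        have h' := (Rat.cast_le (K := ℝ)).mpr hcq
        rwa [show ((1/2 : ℚ) : ℝ) = (1/2 : ℝ) by norm_num] at h' 
      have h1 : ‖(((1 + (chi d p : ℚ) / (p : ℚ) : ℚ) : ℂ)) ^ (-s) - 1‖ ≤ (2:ℝ) ^ s.re + 1 := by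
        refine (norm_sub_le _ _).trans ?_
        rw [norm_ratCast_cpow_of_pos (c_pos hp), neg_re, norm_one]
        exact add_le_add_left (c_rpow_le hcR hσ0) 1
      have h2 : ‖(p : ℂ) ^ (-s)‖ = (p:ℝ) ^ (-s.re) := by
        rw [Complex.norm_natCast_cpow_of_pos hp.pos, neg_re]
      rw [norm_mul, norm_mul, h2]
      calc ‖ψ ((p:ℕ) : ZMod a)‖ * (p:ℝ) ^ (-s.re) *
            ‖(((1 + (chi d p : ℚ) / (p : ℚ) : ℚ) : ℂ)) ^ (-s) - 1‖
          ≤ 1 * (p:ℝ) ^ (-s.re) * ((2:ℝ) ^ s.re + 1) := by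
            apply mul_le_mul ?_ h1 (norm_nonneg _) (by positivity)
            exact mul_le_mul_of_nonneg_right (DirichletCharacter.norm_le_one ψ _)
              (by positivity)
        _ = ((2:ℝ) ^ s.re + 1) * ((p:ℝ) ^ (-s.re)) := by ring

lemma tsum_wfun_prime_pow {p : ℕ} (hp : p.Prime) :
    ∑' e : ℕ, wfun d a ψ s (p ^ e) =
      1 - ψ ((p : ℕ) : ZMod a) * (p : ℂ) ^ (-s) +
        ((1 + (chi d p : ℚ) / (p : ℚ) : ℚ) : ℂ) ^ (-s) * ψ ((p : ℕ) : ZMod a) *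
          (p : ℂ) ^ (-s) := by
  rw [tsum_eq_sum (s := {0, 1}) ?_]
  · rw [Finset.sum_pair (by norm_num : (0:ℕ) ≠ 1), pow_zero, pow_one, wfun_one, wfun_prime hp]
    ring
  · intro e he
    simp only [Finset.mem_insert, Finset.mem_singleton] at he
    push_neg at he
    obtain ⟨k, rfl⟩ : ∃ k, e = k + 2 := ⟨e - 2, by omega⟩
    exact wfun_prime_pow_of_ge_two hp k

lemma norm_G_lt_one (hs : 1 < s.re) {p : ℕ} (hp : p.Prime) :
    ‖ψ ((p : ℕ) : ZMod a) * (p : ℂ) ^ (-s)‖ < 1 := by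
  rw [norm_mul, Complex.norm_natCast_cpow_of_pos hp.pos, neg_re]
  calc ‖ψ ((p:ℕ) : ZMod a)‖ * (p:ℝ) ^ (-s.re)
      ≤ 1 * (p:ℝ) ^ (-s.re) := mul_le_mul_of_nonneg_right
        (DirichletCharacter.norm_le_one ψ _) (by positivity)
    _ = (p:ℝ) ^ (-s.re) := one_mul _
    _ < 1 := Real.rpow_lt_one_of_one_lt_of_neg (by exact_mod_cast hp.one_lt) (by linarith)

lemma tsum_hfun_prime_pow (hs : 1 < s.re) {p : ℕ} (hp : p.Prime) :
    ∑' e : ℕ, hfun d a ψ s (p ^ e) =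
      (1 - ψ ((p : ℕ) : ZMod a) * (p : ℂ) ^ (-s))⁻¹ *
        (1 - ψ ((p : ℕ) : ZMod a) * (p : ℂ) ^ (-s) +
          ((1 + (chi d p : ℚ) / (p : ℚ) : ℚ) : ℂ) ^ (-s) * ψ ((p : ℕ) : ZMod a) *
            (p : ℂ) ^ (-s)) := by
  have hs0 : s ≠ 0 := Complex.ne_zero_of_one_lt_re hs
  set t := ψ ((p:ℕ) : ZMod a) * (p : ℂ) ^ (-s) with ht
  set c := ((1 + (chi d p : ℚ) / (p : ℚ) : ℚ) : ℂ) ^ (-s) with hc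
  have htn : ‖t‖ < 1 := norm_G_lt_one hs hp
  have hsummable : Summable (fun e : ℕ => hfun d a ψ s (p ^ e)) :=
    (summable_norm_hfun hs).of_norm.comp_injective (Nat.pow_right_injective hp.two_le)
  rw [Summable.tsum_eq_zero_add hsummable, pow_zero, hfun_one]
  rw [tsum_congr (fun e => hfun_prime_pow hs0 hp e)]
  have hgeo : ∑' e : ℕ, t ^ e = (1 - t)⁻¹ := tsum_geometric_of_norm_lt_one htn
  have hsum' : ∑' e : ℕ, c * t ^ (e + 1) = c * (t * (1 - t)⁻¹) := by
    have h' : ∀ e : ℕ, c * t ^ (e + 1) = (c * t) * t ^ e := fun e => by ring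
    simp_rw [h']
    rw [tsum_mul_left, hgeo]
    ring
  rw [hsum']
  have hne : (1 : ℂ) - t ≠ 0 := by
    intro hzero
    have h1 : t = 1 := by linear_combination -hzero
    rw [h1] at htn; simp at htn
  field_simp
  ring

end main


set_option maxHeartbeats 2000000 in
/-- For `Re(s) > 1`: `∑_{n≥1} ψ(n)·F(n)^{-s} = (∑_{n≥1} ψ(n)·n^{-s}) ·
`∏_p (1 - ψ(p)p^{-s} + (1 + χ(p)/p)^{-s}·ψ(p)·p^{-s})`, where both series converge
absolutely and the product over the primes converges. -/
theorem euler_product_for_DF (d : ℕ) (hd : 0 < d) (hsq : Squarefree d) (hmod : d % 4 = 3)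
    (a : ℕ) (ha : 0 < a) (ψ : DirichletCharacter ℂ a) (s : ℂ) (hs : 1 < s.re) :
    Summable (fun n : ℕ => ‖ψ ((n + 1 : ℕ) : ZMod a) * ((F d (n + 1) : ℚ) : ℂ) ^ (-s)‖) ∧
    Summable (fun n : ℕ => ‖ψ ((n + 1 : ℕ) : ZMod a) * ((n + 1 : ℕ) : ℂ) ^ (-s)‖) ∧
    Multipliable (fun p : Nat.Primes =>
      1 - ψ ((p.1 : ℕ) : ZMod a) * (p.1 : ℂ) ^ (-s) +
        ((1 + (chi d p.1 : ℚ) / (p.1 : ℚ) : ℚ) : ℂ) ^ (-s) * ψ ((p.1 : ℕ) : ZMod a) *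
          (p.1 : ℂ) ^ (-s)) ∧
    (∑' n : ℕ, ψ ((n + 1 : ℕ) : ZMod a) * ((F d (n + 1) : ℚ) : ℂ) ^ (-s)) =
      (∑' n : ℕ, ψ ((n + 1 : ℕ) : ZMod a) * ((n + 1 : ℕ) : ℂ) ^ (-s)) *
        ∏' p : Nat.Primes,
          (1 - ψ ((p.1 : ℕ) : ZMod a) * (p.1 : ℂ) ^ (-s) +
            ((1 + (chi d p.1 : ℚ) / (p.1 : ℚ) : ℚ) : ℂ) ^ (-s) * ψ ((p.1 : ℕ) : ZMod a) *
              (p.1 : ℂ) ^ (-s)) := by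
  have hs0 : s ≠ 0 := Complex.ne_zero_of_one_lt_re hs
  set B : Nat.Primes → ℂ := fun p =>
    1 - ψ ((p.1 : ℕ) : ZMod a) * (p.1 : ℂ) ^ (-s) +
      ((1 + (chi d p.1 : ℚ) / (p.1 : ℚ) : ℚ) : ℂ) ^ (-s) * ψ ((p.1 : ℕ) : ZMod a) *
        (p.1 : ℂ) ^ (-s) with hB
  have hsum_h : Summable (fun n : ℕ => ‖hfun d a ψ s n‖) := summable_norm_hfun hs
  have hsum_w : Summable (fun n : ℕ => ‖wfun d a ψ s n‖) := summable_norm_wfun hs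
  have hsum_g := summable_dirichletSummand ψ hs
  have Hh : HasProd (fun p : Nat.Primes => ∑' e : ℕ, hfun d a ψ s ((p : ℕ) ^ e))
      (∑' n : ℕ, hfun d a ψ s n) :=
    EulerProduct.eulerProduct_hasProd hfun_one (fun {m n} h => hfun_mul h) hsum_h (hfun_zero hs0)
  have Hw : HasProd (fun p : Nat.Primes => ∑' e : ℕ, wfun d a ψ s ((p : ℕ) ^ e))
      (∑' n : ℕ, wfun d a ψ s n) :=
    EulerProduct.eulerProduct_hasProd wfun_one (fun {m n} h => wfun_mul h) hsum_w wfun_zero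
  have Hg : HasProd
      (fun p : Nat.Primes => (1 - dirichletSummandHom ψ (ne_zero_of_one_lt_re hs) p)⁻¹)
      (∑' n : ℕ, dirichletSummandHom ψ (ne_zero_of_one_lt_re hs) n) :=
    EulerProduct.eulerProduct_completely_multiplicative_hasProd hsum_g
  have hWfac : (fun p : Nat.Primes => ∑' e : ℕ, wfun d a ψ s ((p : ℕ) ^ e)) = B :=
    funext fun p => tsum_wfun_prime_pow p.2
  have HwB : HasProd B (∑' n : ℕ, wfun d a ψ s n) := hWfac ▸ Hw
  refine ⟨?_, ?_, HwB.multipliable, ?_⟩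
  · have c1 : (fun n : ℕ => ‖hfun d a ψ s (n + 1)‖) =
        fun n : ℕ => ‖ψ ((n + 1 : ℕ) : ZMod a) * ((F d (n + 1) : ℚ) : ℂ) ^ (-s)‖ := by
      funext n; simp only [hfun]
    rw [← c1]
    exact (summable_nat_add_iff 1).mpr hsum_h
  · have c2 : (fun n : ℕ => ‖dirichletSummandHom ψ (ne_zero_of_one_lt_re hs) (n + 1)‖) =
        fun n : ℕ => ‖ψ ((n + 1 : ℕ) : ZMod a) * ((n + 1 : ℕ) : ℂ) ^ (-s)‖ := by
      funext n; simp only [dirichletSummandHom, MonoidWithZeroHom.coe_mk, ZeroHom.coe_mk]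
    rw [← c2]
    exact (summable_nat_add_iff 1).mpr hsum_g
  have e1 : (∑' n : ℕ, hfun d a ψ s n) =
      ∑' n : ℕ, ψ ((n + 1 : ℕ) : ZMod a) * ((F d (n + 1) : ℚ) : ℂ) ^ (-s) := by
    rw [Summable.tsum_eq_zero_add hsum_h.of_norm, hfun_zero hs0, zero_add]
    rfl
  have e2 : (∑' n : ℕ, dirichletSummandHom ψ (ne_zero_of_one_lt_re hs) n) =
      ∑' n : ℕ, ψ ((n + 1 : ℕ) : ZMod a) * ((n + 1 : ℕ) : ℂ) ^ (-s) := by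
    rw [Summable.tsum_eq_zero_add hsum_g.of_norm, map_zero, zero_add]
    rfl
  have hfac : (fun p : Nat.Primes => ∑' e : ℕ, hfun d a ψ s ((p : ℕ) ^ e)) =
      fun p : Nat.Primes =>
        (1 - dirichletSummandHom ψ (ne_zero_of_one_lt_re hs) p)⁻¹ * B p :=
    funext fun p => tsum_hfun_prime_pow hs p.2
  rw [← e1, ← e2, ← Hh.tprod_eq, hfac, Multipliable.tprod_mul Hg.multipliable HwB.multipliable,
    Hg.tprod_eq]
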